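/- For every δ with 0 < δ < 1/2, ∫_δ^{1/2} ∫_δ^{1/2} min(1/t², 1/s²) · (ts)^{1/2} ds dt ≤ 2/3. -/

import Mathlib

open MeasureTheory intervalIntegral

lemma cont_aux (t : ℝ) (a b : ℝ) (ha : 0 < a) (hab : a ≤ b) :
    IntervalIntegrable (fun s => min (1/t^2) (1/s^2) * (t * s) ^ ((1/2) : ℝ))
      volume a b := by
  apply ContinuousOn.intervalIntegrable
  have huIcc : Set.uIcc a b = Set.Icc a b := Set.uIcc_of_le hab
  apply ContinuousOn.mul
  · apply ContinuousOn.inf continuousOn_const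
    apply ContinuousOn.div continuousOn_const (by fun_prop)
    intro x hx
    rw [huIcc] at hx
    have : 0 < x := lt_of_lt_of_le ha hx.1
    positivity
  · apply ContinuousOn.rpow_const (by fun_prop)
    intro x _; right; norm_num

lemma sqrt_half : ((1:ℝ)/2) ^ (-(1/2):ℝ) = Real.sqrt 2 := by
  rw [Real.rpow_neg (by norm_num), show (1/2:ℝ) = 2⁻¹ by norm_num,
    Real.inv_rpow (by norm_num), inv_inv, Real.sqrt_eq_rpow]
  norm_num

lemma inner_eq (δ : ℝ) (h0 : 0 < δ) (h1 : δ < 1/2) (t : ℝ) (ht : t ∈ Set.Icc δ (1/2:ℝ)) :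
    (∫ s in δ..(1/2 : ℝ), min (1/t^2) (1/s^2) * (t * s) ^ ((1/2) : ℝ))
      = 8/3 - (2/3) * δ^((3/2):ℝ) * t^(-(3/2):ℝ) - 2 * Real.sqrt 2 * t^((1/2):ℝ) := by
  obtain ⟨htδ, ht2⟩ := ht
  have ht0 : 0 < t := lt_of_lt_of_le h0 htδ
  rw [← intervalIntegral.integral_add_adjacent_intervals (a := δ) (b := t) (c := 1/2)
      (cont_aux t δ t h0 htδ) (cont_aux t t (1/2) ht0 ht2)]
  have h1' : (∫ s in δ..t, min (1/t^2) (1/s^2) * (t * s) ^ ((1/2) : ℝ))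
      = ∫ s in δ..t, ((1/t^2) * t^((1/2):ℝ)) * s^((1/2):ℝ) := by
    apply intervalIntegral.integral_congr
    intro s hs
    rw [Set.uIcc_of_le htδ] at hs
    have hs0 : 0 < s := lt_of_lt_of_le h0 hs.1
    have hst : s ≤ t := hs.2
    dsimp only
    rw [min_eq_left (by
      apply one_div_le_one_div_of_le (by positivity)
      nlinarith), Real.mul_rpow ht0.le hs0.le]
    ring
  have h2' : (∫ s in t..(1/2:ℝ), min (1/t^2) (1/s^2) * (t * s) ^ ((1/2) : ℝ))
      = ∫ s in t..(1/2:ℝ), t^((1/2):ℝ) * s^(-(3/2):ℝ) := by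
    apply intervalIntegral.integral_congr
    intro s hs
    rw [Set.uIcc_of_le ht2] at hs
    have hs0 : 0 < s := lt_of_lt_of_le ht0 hs.1
    dsimp only
    rw [min_eq_right (by
      apply one_div_le_one_div_of_le (by positivity)
      nlinarith [hs.1]), Real.mul_rpow ht0.le hs0.le]
    rw [show s ^ (-(3/2):ℝ) = s ^ (-(2:ℝ)) * s ^ ((1/2):ℝ) by
      rw [← Real.rpow_add hs0]; norm_num]
    rw [Real.rpow_neg hs0.le, Real.rpow_two]
    field_simp
  rw [h1', h2', intervalIntegral.integral_const_mul, intervalIntegral.integral_const_mul,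
    integral_rpow (Or.inl (by norm_num : (-1:ℝ) < 1/2)),
    integral_rpow (Or.inr ⟨by norm_num, by
      rw [Set.uIcc_of_le ht2]; intro h; exact absurd h.1 (by linarith)⟩)]
  rw [show ((1:ℝ)/2 + 1) = ((3/2):ℝ) by norm_num,
      show ((-(3/2):ℝ) + 1) = (-(1/2):ℝ) by norm_num]
  have ha : (0:ℝ) < t ^ ((1/2):ℝ) := Real.rpow_pos_of_pos ht0 _
  set a := t ^ ((1/2):ℝ) with hadef
  have ha2 : a^2 = t := by
    rw [hadef, ← Real.rpow_natCast _ 2, ← Real.rpow_mul ht0.le]; norm_num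
  have h32 : t ^ ((3/2):ℝ) = t * a := by
    rw [show ((3/2):ℝ) = 1 + 1/2 by norm_num, Real.rpow_add ht0, Real.rpow_one]
  have hm32 : t ^ (-(3/2):ℝ) = (t * a)⁻¹ := by
    rw [← h32, ← Real.rpow_neg ht0.le]
  have hm12 : t ^ (-(1/2):ℝ) = a⁻¹ := by
    rw [hadef, ← Real.rpow_neg ht0.le]
  rw [h32, hm32, hm12, sqrt_half, ← ha2]
  have hr0 : (0:ℝ) < Real.sqrt 2 := by positivity
  have hane : a ≠ 0 := ne_of_gt ha
  field_simp
  ring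

theorem double_integral_mixed_upper (δ : ℝ) (h0 : 0 < δ) (h1 : δ < 1/2) :
    (∫ t in δ..(1/2 : ℝ), ∫ s in δ..(1/2 : ℝ),
        min (1/t^2) (1/s^2) * (t * s) ^ ((1/2) : ℝ)) ≤ 2/3 := by
  have hδ2 : δ ≤ 1/2 := le_of_lt h1
  have key : (∫ t in δ..(1/2 : ℝ), ∫ s in δ..(1/2 : ℝ),
        min (1/t^2) (1/s^2) * (t * s) ^ ((1/2) : ℝ))
      = ∫ t in δ..(1/2 : ℝ),
          (8/3 - (2/3) * δ^((3/2):ℝ) * t^(-(3/2):ℝ) - 2 * Real.sqrt 2 * t^((1/2):ℝ)) := by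
    apply intervalIntegral.integral_congr
    intro t ht
    rw [Set.uIcc_of_le hδ2] at ht
    exact inner_eq δ h0 h1 t ht
  rw [key]
  have hnot : (0:ℝ) ∉ Set.uIcc δ (1/2:ℝ) := by
    rw [Set.uIcc_of_le hδ2]; intro h; exact absurd h.1 (by linarith)
  have i1 : IntervalIntegrable (fun t : ℝ => t ^ (-(3/2):ℝ)) volume δ (1/2) :=
    intervalIntegral.intervalIntegrable_rpow (Or.inr hnot)
  have i2 : IntervalIntegrable (fun t : ℝ => t ^ ((1/2):ℝ)) volume δ (1/2) :=
    intervalIntegral.intervalIntegrable_rpow (Or.inl (by norm_num))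
  rw [intervalIntegral.integral_sub
      ((_root_.intervalIntegrable_const).sub (i1.const_mul _)) (i2.const_mul _),
    intervalIntegral.integral_sub _root_.intervalIntegrable_const (i1.const_mul _),
    intervalIntegral.integral_const_mul, intervalIntegral.integral_const_mul,
    intervalIntegral.integral_const,
    integral_rpow (Or.inr ⟨by norm_num, hnot⟩),
    integral_rpow (Or.inl (by norm_num : (-1:ℝ) < 1/2))]
  rw [show ((1:ℝ)/2 + 1) = ((3/2):ℝ) by norm_num,
      show ((-(3/2):ℝ) + 1) = (-(1/2):ℝ) by norm_num, sqrt_half]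
  have hb : (0:ℝ) < δ ^ ((1/2):ℝ) := Real.rpow_pos_of_pos h0 _
  set b := δ ^ ((1/2):ℝ) with hbdef
  have hb2 : b^2 = δ := by
    rw [hbdef, ← Real.rpow_natCast _ 2, ← Real.rpow_mul h0.le]; norm_num
  have h32 : δ ^ ((3/2):ℝ) = δ * b := by
    rw [show ((3/2):ℝ) = 1 + 1/2 by norm_num, Real.rpow_add h0, Real.rpow_one]
  have hm12 : δ ^ (-(1/2):ℝ) = b⁻¹ := by
    rw [hbdef, ← Real.rpow_neg h0.le]
  have hhalf32 : ((1:ℝ)/2) ^ ((3/2):ℝ) = Real.sqrt 2 / 4 := by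
    rw [show ((3/2):ℝ) = 1 + 1/2 by norm_num, Real.rpow_add (by norm_num : (0:ℝ) < 1/2),
      Real.rpow_one, show ((1:ℝ)/2) ^ ((1/2):ℝ) = ((1/2:ℝ)^(-(1/2):ℝ))⁻¹ by
        rw [← Real.rpow_neg (by norm_num)]; norm_num, sqrt_half]
    rw [eq_div_iff (by norm_num)]
    have r2 : Real.sqrt 2 ^ 2 = 2 := Real.sq_sqrt (by norm_num)
    have r0 : (0:ℝ) < Real.sqrt 2 := by positivity
    field_simp
    nlinarith
  rw [h32, hm12, hhalf32]
  have r2 : Real.sqrt 2 ^ 2 = 2 := Real.sq_sqrt (by norm_num)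
  have r0 : (0:ℝ) < Real.sqrt 2 := by positivity
  have hbinv : b * b⁻¹ = 1 := mul_inv_cancel₀ (ne_of_gt hb)
  have hb1 : Real.sqrt 2 * b ≤ 1 := by nlinarith
  rw [smul_eq_mul]
  have hδbb : δ * b * b⁻¹ = δ := by rw [mul_assoc, hbinv, mul_one]
  have h5 : δ * (Real.sqrt 2 * b) ≤ δ := by nlinarith
  nlinarith [hδbb, h5, r2]
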